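/- For every integer θ ≥ 3, M(C_{θ+2}) ≥ M(C_θ) + θ² + 4θ + 5. -/

import Mathlib

open Finset

/-- The product-sum M(f) of a vertex labeling: the sum of `f u * f v` over all edges
`{u,v}` of `G`, each edge counted exactly once. -/
noncomputable def prodSum {V : Type*} [Fintype V] (G : SimpleGraph V) (f : V → ℕ) : ℕ := by
  classical
  exact ∑ e ∈ G.edgeFinset, Sym2.lift ⟨fun u v => f u * f v, fun u v => Nat.mul_comm _ _⟩ e

/-- A labeling of a graph on `V`: a bijection from the vertices onto `{1,…,|V|}`. -/
def IsLabeling (V : Type*) [Fintype V] (f : V → ℕ) : Prop :=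
  Set.BijOn f Set.univ (Set.Icc 1 (Fintype.card V))

/-- MinPS of `G`: the minimum of `M(f)` over all labelings `f`. -/
noncomputable def minPS {V : Type*} [Fintype V] (G : SimpleGraph V) : ℕ :=
  sInf { m | ∃ f : V → ℕ, IsLabeling V f ∧ prodSum G f = m }

/-! ### Auxiliary material -/

section Bridge

lemma MinPS.two_ne_zero_fin (k : ℕ) (hk : 1 ≤ k) : (2 : Fin (k+2)) ≠ 0 := by
  intro h
  have hv := congrArg Fin.val h
  have h2 : ((2 : Fin (k+2)) : ℕ) = 2 % (k+2) := rfl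
  rw [h2, Nat.mod_eq_of_lt (by omega)] at hv
  simp at hv

open Fin.CommRing in
lemma MinPS.cycle_inj (k : ℕ) (hk : 1 ≤ k) :
    Function.Injective (fun i : Fin (k+2) => s(i, i+1)) := by
  intro i j h
  simp only [Sym2.eq, Sym2.rel_iff', Prod.mk.injEq, Prod.swap_prod_mk] at h
  rcases h with ⟨h1, _⟩ | ⟨h1, h2⟩
  · exact h1
  · exfalso
    have hj : j + 2 = j + 0 := by
      calc j + 2 = (j + 1) + 1 := by ring
      _ = i + 1 := by rw [← h1]
      _ = j + 0 := by rw [h2, add_zero]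
    exact MinPS.two_ne_zero_fin k hk (add_left_cancel hj)

lemma MinPS.edge_image (k : ℕ) (hk : 1 ≤ k)
    {inst : Fintype ((SimpleGraph.cycleGraph (k+2)).edgeSet)} :
    (SimpleGraph.cycleGraph (k+2)).edgeFinset =
      Finset.univ.image (fun i : Fin (k+2) => s(i, i+1)) := by
  ext e
  induction e with
  | _ u v =>
    simp only [SimpleGraph.mem_edgeFinset, SimpleGraph.mem_edgeSet, SimpleGraph.cycleGraph_adj,
      Finset.mem_image, Finset.mem_univ, true_and]
    constructor
    · rintro (h | h)
      · exact ⟨v, by rw [sub_eq_iff_eq_add'] at h; rw [h, Sym2.eq_swap]⟩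
      · exact ⟨u, by rw [sub_eq_iff_eq_add'] at h; rw [h]⟩
    · rintro ⟨i, hi⟩
      rcases Sym2.eq_iff.mp hi with ⟨ha, hb⟩ | ⟨ha, hb⟩
      · right; rw [← ha, ← hb]; simp
      · left; rw [← ha, ← hb]; simp

lemma MinPS.prodSum_cycle (k : ℕ) (hk : 1 ≤ k) (f : Fin (k+2) → ℕ) :
    prodSum (SimpleGraph.cycleGraph (k+2)) f = ∑ i : Fin (k+2), f i * f (i+1) := by
  unfold prodSum
  rw [MinPS.edge_image k hk, Finset.sum_image (fun a _ b _ h => MinPS.cycle_inj k hk h)]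
  simp

end Bridge

section SumLemmas

lemma MinPS.sum_ind {α : Type*} (s : Finset α) (p : α → Prop) [DecidablePred p] :
    ∑ x ∈ s, (if p x then (1:ℕ) else 0) = (s.filter p).card :=
  (Finset.card_filter p s).symm

lemma MinPS.range_filter_lt (m b : ℕ) (hb : b ≤ m) :
    Finset.filter (fun t => t < b) (range m) = range b := by
  ext t; simp only [Finset.mem_filter, Finset.mem_range]; omega

lemma MinPS.sumA (m : ℕ) : ∀ k ≤ m, 2 * ∑ t ∈ range m, (k - t) = k * (k+1) := by
  intro k
  induction k with
  | zero => intro _; simp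
  | succ k ih =>
    intro hk
    have hs : ∀ t ∈ range m, (k+1) - t = (k - t) + (if t < k+1 then 1 else 0) := by
      intro t _; split <;> omega
    rw [Finset.sum_congr rfl hs, Finset.sum_add_distrib, MinPS.sum_ind,
      MinPS.range_filter_lt m (k+1) hk, Finset.card_range]
    have ihk := ih (by omega)
    calc 2 * (∑ t ∈ range m, (k - t) + (k+1))
        = 2 * ∑ t ∈ range m, (k - t) + 2*(k+1) := by ring
      _ = k*(k+1) + 2*(k+1) := by rw [ihk]
      _ = (k+1)*(k+1+1) := by ring

lemma MinPS.sumC (m : ℕ) : 3 * ∑ j ∈ range m, (j+1)*(j+2) = m*(m+1)*(m+2) := by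
  induction m with
  | zero => simp
  | succ m ih =>
    rw [Finset.sum_range_succ]
    calc 3 * (∑ j ∈ range m, (j+1)*(j+2) + (m+1)*(m+2))
        = 3 * ∑ j ∈ range m, (j+1)*(j+2) + 3*((m+1)*(m+2)) := by ring
      _ = m*(m+1)*(m+2) + 3*((m+1)*(m+2)) := by rw [ih]
      _ = (m+1)*(m+1+1)*(m+1+2) := by ring

lemma MinPS.sumBase (m : ℕ) :
    6 * ∑ s ∈ range m, ∑ t ∈ range m, (m - s - t) = m*(m+1)*(m+2) := by
  have h1 : ∀ s ∈ range m, ∑ t ∈ range m, (m - s - t) = ∑ t ∈ range m, ((m-s) - t) := by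
    intro s _; apply Finset.sum_congr rfl; intro t _; omega
  rw [Finset.sum_congr rfl h1]
  have h2 : 6 * ∑ s ∈ range m, ∑ t ∈ range m, ((m-s) - t)
      = 3 * ∑ s ∈ range m, (2 * ∑ t ∈ range m, ((m-s) - t)) := by
    rw [← Finset.mul_sum]; ring
  rw [h2]
  have h3 : ∀ s ∈ range m, 2 * ∑ t ∈ range m, ((m-s) - t) = (m-s)*((m-s)+1) := by
    intro s _; exact MinPS.sumA m (m-s) (by omega)
  rw [Finset.sum_congr rfl h3]
  have h4 : ∀ s ∈ range m, (m-s)*((m-s)+1) = ((m-1-s)+1)*((m-1-s)+2) := by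
    intro s hs; simp only [Finset.mem_range] at hs
    have e1 : (m-1-s)+1 = m - s := by omega
    have e2 : (m-1-s)+2 = (m-s)+1 := by omega
    rw [e1, e2]
  rw [Finset.sum_congr rfl h4, Finset.sum_range_reflect (fun j => (j+1)*(j+2)) m]
  exact MinPS.sumC m

end SumLemmas

section Counting
variable {m : ℕ} [NeZero m] (f : Fin m → ℕ)

lemma MinPS.card_preimage (hf : Set.BijOn f Set.univ (Set.Icc 1 m))
    (a b : ℕ) (ha : 1 ≤ a) (hb : b ≤ m) :
    (univ.filter (fun x : Fin m => a ≤ f x ∧ f x ≤ b)).card = b + 1 - a := by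
  have hcard : (univ.filter (fun x : Fin m => a ≤ f x ∧ f x ≤ b)).card
      = (Finset.Icc a b).card := by
    apply Finset.card_nbij (i := f)
    · intro x hx
      simp only [Finset.mem_coe, Finset.mem_filter, Finset.mem_univ, true_and] at hx
      simp only [Finset.mem_coe, Finset.mem_Icc]
      exact hx
    · intro x _ y _ hxy
      exact hf.injOn (Set.mem_univ x) (Set.mem_univ y) hxy
    · intro v hv
      simp only [Finset.coe_Icc, Set.mem_Icc] at hv
      have hv' : v ∈ Set.Icc 1 m := ⟨by omega, by omega⟩
      obtain ⟨x, -, hx⟩ := hf.surjOn hv'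
      refine ⟨x, ?_, hx⟩
      simp only [Finset.coe_filter, Finset.mem_univ, Set.mem_setOf_eq, true_and]
      rw [hx]
      exact hv
  rw [hcard, Nat.card_Icc]

lemma MinPS.count_ge (hf : Set.BijOn f Set.univ (Set.Icc 1 m)) (s : ℕ) :
    (univ.filter (fun x : Fin m => s < f x)).card = m - s := by
  have hfm : ∀ x, f x ≤ m := fun x => (hf.mapsTo (Set.mem_univ x)).2
  have : (univ.filter (fun x : Fin m => s < f x))
      = univ.filter (fun x : Fin m => s+1 ≤ f x ∧ f x ≤ m) := by
    apply Finset.filter_congr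
    intro x _
    simp only [Nat.lt_iff_add_one_le]
    exact ⟨fun h => ⟨h, hfm x⟩, fun h => h.1⟩
  rw [this, MinPS.card_preimage f hf (s+1) m (by omega) le_rfl]
  omega

lemma MinPS.grand_identity (hfm : ∀ x, f x ≤ m) :
    ∑ i : Fin m, f i * f (i+1) =
      ∑ s ∈ range m, ∑ t ∈ range m,
        (univ.filter (fun i : Fin m => s < f i ∧ t < f (i+1))).card := by
  calc ∑ i : Fin m, f i * f (i+1)
      = ∑ i : Fin m, ∑ s ∈ range m, ∑ t ∈ range m,
          (if s < f i ∧ t < f (i+1) then 1 else 0) := by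
        apply Finset.sum_congr rfl
        intro i _
        have key : ∀ a b : ℕ, a ≤ m → b ≤ m →
            ∑ s ∈ range m, ∑ t ∈ range m, (if s < a ∧ t < b then (1:ℕ) else 0) = a * b := by
          intro a b hla hlb
          have inner : ∀ s, ∑ t ∈ range m, (if s < a ∧ t < b then (1:ℕ) else 0)
              = b * (if s < a then 1 else 0) := by
            intro s
            by_cases hsa : s < a
            · simp only [hsa, true_and, if_true, mul_one]
              rw [MinPS.sum_ind, MinPS.range_filter_lt m b hlb, Finset.card_range]
            · simp [hsa]
          rw [Finset.sum_congr rfl (fun s _ => inner s), ← Finset.mul_sum,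
            MinPS.sum_ind, MinPS.range_filter_lt m a hla, Finset.card_range, mul_comm]
        rw [key (f i) (f (i+1)) (hfm i) (hfm (i+1))]
      _ = ∑ s ∈ range m, ∑ t ∈ range m,
            (univ.filter (fun i : Fin m => s < f i ∧ t < f (i+1))).card := by
        rw [Finset.sum_comm]
        apply Finset.sum_congr rfl
        intro s _
        rw [Finset.sum_comm]
        apply Finset.sum_congr rfl
        intro t _
        rw [← Finset.card_filter]

lemma MinPS.Acard_ge (hf : Set.BijOn f Set.univ (Set.Icc 1 m)) (s t : ℕ) :
    m - s - t ≤ (univ.filter (fun i : Fin m => s < f i ∧ t < f (i+1))).card := by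
  have hST : univ.filter (fun i : Fin m => s < f i ∧ t < f (i+1)) =
      (univ.filter (fun i : Fin m => s < f i)) ∩ (univ.filter (fun i : Fin m => t < f (i+1))) := by
    rw [← Finset.filter_and]
  have hcS := MinPS.count_ge f hf s
  have hcT : (univ.filter (fun i : Fin m => t < f (i+1))).card = m - t := by
    have hbij : (univ.filter (fun i : Fin m => t < f (i+1))).card
        = (univ.filter (fun x : Fin m => t < f x)).card := by
      apply Finset.card_nbij' (i := fun i => i + 1) (j := fun i => i - 1)
      · intro x hx
        simp only [Finset.mem_coe, Finset.mem_filter, Finset.mem_univ, true_and] at hx ⊢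
        exact hx
      · intro x hx
        simp only [Finset.mem_filter, Finset.mem_univ, true_and] at hx ⊢
        simpa using hx
      · intro x _; simp
      · intro x _; simp
    rw [hbij, MinPS.count_ge f hf t]
  have hunion : ((univ.filter (fun i : Fin m => s < f i))
      ∪ (univ.filter (fun i : Fin m => t < f (i+1)))).card ≤ m := by
    have := Finset.card_le_univ ((univ.filter (fun i : Fin m => s < f i))
      ∪ (univ.filter (fun i : Fin m => t < f (i+1))))
    simpa using this
  have hie := Finset.card_inter_add_card_union (univ.filter (fun i : Fin m => s < f i))
    (univ.filter (fun i : Fin m => t < f (i+1)))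
  rw [hST]
  omega

open Fin.CommRing in
lemma MinPS.exists_heavy (hf : Set.BijOn f Set.univ (Set.Icc 1 m))
    (s : ℕ) (hs2 : 2 ≤ s) (hsm : 2*s ≤ m+1) :
    ∃ i : Fin m, (s ≤ f i ∧ m+2-s ≤ f (i+1)) ∨ (m+2-s ≤ f i ∧ s ≤ f (i+1)) := by
  by_contra hcon
  push_neg at hcon
  have hfm : ∀ x, f x ≤ m := fun x => (hf.mapsTo (Set.mem_univ x)).2
  have hf1 : ∀ x, 1 ≤ f x := fun x => (hf.mapsTo (Set.mem_univ x)).1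
  set u := m + 2 - s with hu
  have hm3 : 3 ≤ m := by omega
  set A := univ.filter (fun x : Fin m => u ≤ f x ∧ f x ≤ m) with hA
  set B := univ.filter (fun x : Fin m => 1 ≤ f x ∧ f x ≤ s-1) with hB
  have hcA : A.card = s - 1 := by
    rw [hA, MinPS.card_preimage f hf u m (by omega) le_rfl]; omega
  have hcB : B.card = s - 1 := by
    rw [hB, MinPS.card_preimage f hf 1 (s-1) le_rfl (by omega)]; omega
  have memA : ∀ x : Fin m, x ∈ A ↔ u ≤ f x := by
    intro x; rw [hA]; simp only [Finset.mem_filter, Finset.mem_univ, true_and]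
    exact ⟨fun h => h.1, fun h => ⟨h, hfm x⟩⟩
  have memB : ∀ x : Fin m, x ∈ B ↔ f x ≤ s - 1 := by
    intro x; rw [hB]; simp only [Finset.mem_filter, Finset.mem_univ, true_and]
    exact ⟨fun h => h.2, fun h => ⟨hf1 x, h⟩⟩
  have step1 : ∀ x ∈ A, x + 1 ∈ B := by
    intro x hx
    rw [memA] at hx
    rw [memB]
    have := (hcon x).2 (by omega)
    omega
  have step2 : ∀ x ∈ A, x - 1 ∈ B := by
    intro x hx
    rw [memA] at hx
    rw [memB]
    have hxx : (x - 1) + 1 = x := by ring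
    have := (hcon (x-1)).1
    rw [hxx] at this
    by_contra hc
    have hs' : s ≤ f (x - 1) := by omega
    have := this hs'
    omega
  have himg1 : A.image (fun x => x + 1) = B := by
    apply Finset.eq_of_subset_of_card_le
    · intro y hy
      simp only [Finset.mem_image] at hy
      obtain ⟨x, hx, rfl⟩ := hy
      exact step1 x hx
    · rw [Finset.card_image_of_injective _ (add_left_injective 1), hcA, hcB]
  have himg2 : A.image (fun x => x - 1) = B := by
    apply Finset.eq_of_subset_of_card_le
    · intro y hy
      simp only [Finset.mem_image] at hy
      obtain ⟨x, hx, rfl⟩ := hy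
      exact step2 x hx
    · rw [Finset.card_image_of_injective _ (sub_left_injective), hcA, hcB]
  have step3 : ∀ x ∈ A, x + 2 ∈ A := by
    intro x hx
    have h1 : x + 1 ∈ B := step1 x hx
    rw [← himg2, Finset.mem_image] at h1
    obtain ⟨z, hz, hzx⟩ := h1
    have : z = x + 2 := by
      have := congrArg (fun w => w + 1) hzx
      simp only [sub_add_cancel] at this
      rw [this]; ring
    rwa [← this]
  have hAne : A.Nonempty := by
    rw [← Finset.card_pos, hcA]; omega
  obtain ⟨x₀, hx₀⟩ := hAne
  have hK : ∀ k : ℕ, x₀ + ((2*k : ℕ) : Fin m) ∈ A := by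
    intro k
    induction k with
    | zero => simpa using hx₀
    | succ k ih =>
      have hcast : ((2*(k+1) : ℕ) : Fin m) = ((2*k : ℕ) : Fin m) + 2 := by
        push_cast; ring
      rw [hcast, ← add_assoc]
      exact step3 _ ih
  set K := (m+1)/2 with hKdef
  have hinj : Set.InjOn (fun k : ℕ => x₀ + ((2*k : ℕ) : Fin m)) (range K) := by
    intro k1 hk1 k2 hk2 heq
    simp only [Finset.coe_range, Set.mem_Iio] at hk1 hk2
    have h2 : ((2*k1 : ℕ) : Fin m) = ((2*k2 : ℕ) : Fin m) := add_left_cancel heq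
    have hv := congrArg Fin.val h2
    rw [Fin.val_natCast, Fin.val_natCast, Nat.mod_eq_of_lt (by omega),
      Nat.mod_eq_of_lt (by omega)] at hv
    omega
  have hcard := Finset.card_le_card_of_injOn _ (fun k _ => hK k) hinj
  rw [Finset.card_range, hcA] at hcard
  omega

end Counting

/-- the exact value of six times the minimum product sum of a cycle -/
def MinPS.Emap (m : ℕ) : ℕ := m*(m+1)*(m+2) + 6*((m+1)/2 - 1)

lemma MinPS.lower_bound {m : ℕ} [NeZero m] (hm3 : 3 ≤ m) (f : Fin m → ℕ)
    (hf : Set.BijOn f Set.univ (Set.Icc 1 m)) :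
    MinPS.Emap m ≤ 6 * ∑ i : Fin m, f i * f (i+1) := by
  classical
  unfold MinPS.Emap
  have hfm : ∀ x, f x ≤ m := fun x => (hf.mapsTo (Set.mem_univ x)).2
  rw [MinPS.grand_identity f hfm]
  set N : ℕ × ℕ → ℕ :=
    fun p => (univ.filter (fun i : Fin m => p.1 < f i ∧ p.2 < f (i+1))).card with hN
  have hsum : ∑ s ∈ range m, ∑ t ∈ range m,
      (univ.filter (fun i : Fin m => s < f i ∧ t < f (i+1))).card
      = ∑ p ∈ range m ×ˢ range m, N p := by
    rw [Finset.sum_product]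
  rw [hsum]
  set D := Finset.Icc 1 ((m+1)/2 - 1) with hD
  set T1 := D.image (fun s => (s, m - s)) with hT1
  set T2 := D.image (fun s => (m - s, s)) with hT2
  have hDmem : ∀ s ∈ D, 1 ≤ s ∧ s ≤ (m+1)/2 - 1 := by
    intro s hs; rw [hD, Finset.mem_Icc] at hs; exact hs
  have hT1sub : T1 ⊆ range m ×ˢ range m := by
    intro p hp
    rw [hT1, Finset.mem_image] at hp
    obtain ⟨s, hs, rfl⟩ := hp
    have := hDmem s hs
    simp only [Finset.mem_product, Finset.mem_range]
    omega
  have hT2sub : T2 ⊆ range m ×ˢ range m := by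
    intro p hp
    rw [hT2, Finset.mem_image] at hp
    obtain ⟨s, hs, rfl⟩ := hp
    have := hDmem s hs
    simp only [Finset.mem_product, Finset.mem_range]
    omega
  have hdisj : Disjoint T1 T2 := by
    rw [Finset.disjoint_left]
    intro p hp1 hp2
    rw [hT1, Finset.mem_image] at hp1
    rw [hT2, Finset.mem_image] at hp2
    obtain ⟨s, hs, rfl⟩ := hp1
    obtain ⟨s', hs', heq⟩ := hp2
    have h1 := hDmem s hs
    have h2 := hDmem s' hs'
    have := congrArg Prod.fst heq
    simp only at this
    omega
  set T := T1 ∪ T2 with hT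
  have hTsub : T ⊆ range m ×ˢ range m := Finset.union_subset hT1sub hT2sub
  have split : ∑ p ∈ range m ×ˢ range m, N p
      = ∑ p ∈ (range m ×ˢ range m) \ T, N p + ∑ p ∈ T, N p :=
    (Finset.sum_sdiff hTsub).symm
  have hbase0 : ∀ p ∈ T, m - p.1 - p.2 = 0 := by
    intro p hp
    rw [hT, Finset.mem_union] at hp
    rcases hp with hp | hp
    · rw [hT1, Finset.mem_image] at hp
      obtain ⟨s, hs, rfl⟩ := hp
      have := hDmem s hs
      simp only
      omega
    · rw [hT2, Finset.mem_image] at hp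
      obtain ⟨s, hs, rfl⟩ := hp
      have := hDmem s hs
      simp only
      omega
  have hbase_le : ∑ p ∈ range m ×ˢ range m, (m - p.1 - p.2)
      ≤ ∑ p ∈ (range m ×ˢ range m) \ T, N p := by
    rw [← Finset.sum_sdiff hTsub (f := fun p => m - p.1 - p.2)]
    have h0 : ∑ p ∈ T, (m - p.1 - p.2) = 0 := Finset.sum_eq_zero hbase0
    rw [h0, add_zero]
    apply Finset.sum_le_sum
    intro p _
    exact MinPS.Acard_ge f hf p.1 p.2
  have hTsum : (m+1)/2 - 1 ≤ ∑ p ∈ T, N p := by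
    have hsplit : ∑ p ∈ T, N p = ∑ p ∈ T1, N p + ∑ p ∈ T2, N p := by
      rw [hT, Finset.sum_union hdisj]
    have hi1 : ∑ p ∈ T1, N p = ∑ s ∈ D, N (s, m - s) := by
      rw [hT1, Finset.sum_image]
      intro x _ y _ h
      exact (Prod.mk.injEq _ _ _ _).mp h |>.1
    have hi2 : ∑ p ∈ T2, N p = ∑ s ∈ D, N (m - s, s) := by
      rw [hT2, Finset.sum_image]
      intro x _ y _ h
      exact (Prod.mk.injEq _ _ _ _).mp h |>.2
    have hpoint : ∀ s ∈ D, 1 ≤ N (s, m - s) + N (m - s, s) := by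
      intro s hs
      have hd := hDmem s hs
      obtain ⟨i, hi⟩ := MinPS.exists_heavy f hf (s+1) (by omega) (by omega)
      rcases hi with ⟨h1, h2⟩ | ⟨h1, h2⟩
      · have : i ∈ univ.filter (fun i : Fin m => s < f i ∧ (m - s) < f (i+1)) := by
          simp only [Finset.mem_filter, Finset.mem_univ, true_and]
          constructor <;> omega
        have hpos : 0 < N (s, m - s) := Finset.card_pos.mpr ⟨i, this⟩
        omega
      · have : i ∈ univ.filter (fun i : Fin m => (m - s) < f i ∧ s < f (i+1)) := by
          simp only [Finset.mem_filter, Finset.mem_univ, true_and]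
          constructor <;> omega
        have hpos : 0 < N (m - s, s) := Finset.card_pos.mpr ⟨i, this⟩
        omega
    calc (m+1)/2 - 1 = ∑ s ∈ D, 1 := by
          rw [Finset.sum_const, Nat.card_Icc]; simp
      _ ≤ ∑ s ∈ D, (N (s, m - s) + N (m - s, s)) := Finset.sum_le_sum hpoint
      _ = ∑ p ∈ T, N p := by rw [hsplit, hi1, hi2, Finset.sum_add_distrib]
  have hbase_id := MinPS.sumBase m
  have hbase_prod : ∑ p ∈ range m ×ˢ range m, (m - p.1 - p.2)
      = ∑ s ∈ range m, ∑ t ∈ range m, (m - s - t) := Finset.sum_product _ _ _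
  omega

/-! ### The optimal labeling -/

def MinPS.bfun (m : ℕ) : ℕ → ℕ := fun i => if Even i then i + 1 else m - i

def MinPS.Afun (m : ℕ) : ℕ → ℕ :=
  fun i => if i < (m+1)/2 then MinPS.bfun m i else m + 1 - MinPS.bfun m (m - 1 - i)

namespace MinPS

section UB
variable {m : ℕ}

lemma bfun_bounds (hm : 3 ≤ m) (i : ℕ) (hi : i ≤ m - 1) : 1 ≤ bfun m i ∧ bfun m i ≤ m := by
  unfold bfun; split <;> omega

lemma bfun_inj (hm : 3 ≤ m) : ∀ i < (m+1)/2, ∀ j < (m+1)/2, bfun m i = bfun m j → i = j := by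
  intro i hi j hj
  unfold bfun
  rcases Nat.even_or_odd i with hei | hoi <;> rcases Nat.even_or_odd j with hej | hoj
  · rw [if_pos hei, if_pos hej]; omega
  · rw [if_pos hei, if_neg (Nat.not_even_iff_odd.mpr hoj)]
    rcases hei with ⟨a, ha⟩; rcases hoj with ⟨c, hc⟩
    omega
  · rw [if_neg (Nat.not_even_iff_odd.mpr hoi), if_pos hej]
    rcases hej with ⟨a, ha⟩; rcases hoi with ⟨c, hc⟩
    omega
  · rw [if_neg (Nat.not_even_iff_odd.mpr hoi), if_neg (Nat.not_even_iff_odd.mpr hoj)]; omega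

lemma bfun_no_pair (hm : 3 ≤ m) : ∀ i < (m+1)/2, ∀ j ≤ m - 1 - (m+1)/2,
    bfun m i + bfun m j = m + 1 → False := by
  intro i hi j hj
  unfold bfun
  rcases Nat.even_or_odd i with hei | hoi <;> rcases Nat.even_or_odd j with hej | hoj
  · rw [if_pos hei, if_pos hej]
    omega
  · rw [if_pos hei, if_neg (Nat.not_even_iff_odd.mpr hoj)]
    rcases hei with ⟨a, ha⟩; rcases hoj with ⟨c, hc⟩
    omega
  · rw [if_neg (Nat.not_even_iff_odd.mpr hoi), if_pos hej]
    rcases hej with ⟨a, ha⟩; rcases hoi with ⟨c, hc⟩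
    omega
  · rw [if_neg (Nat.not_even_iff_odd.mpr hoi), if_neg (Nat.not_even_iff_odd.mpr hoj)]
    omega

lemma Afun_inj (hm : 3 ≤ m) : ∀ i ≤ m-1, ∀ j ≤ m-1, Afun m i = Afun m j → i = j := by
  intro i hi j hj
  unfold Afun
  have hbb1 : ∀ x ≤ m - 1, 1 ≤ bfun m x ∧ bfun m x ≤ m := fun x hx => bfun_bounds hm x hx
  by_cases h1 : i < (m+1)/2 <;> by_cases h2 : j < (m+1)/2
  · rw [if_pos h1, if_pos h2]; exact bfun_inj hm i h1 j h2
  · rw [if_pos h1, if_neg h2]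
    intro heq
    exfalso
    have hbj := hbb1 (m-1-j) (by omega)
    exact bfun_no_pair hm i h1 (m-1-j) (by omega) (by omega)
  · rw [if_neg h1, if_pos h2]
    intro heq
    exfalso
    have hbi := hbb1 (m-1-i) (by omega)
    exact bfun_no_pair hm j h2 (m-1-i) (by omega) (by omega)
  · rw [if_neg h1, if_neg h2]
    intro heq
    have hbi := hbb1 (m-1-i) (by omega)
    have hbj := hbb1 (m-1-j) (by omega)
    have := bfun_inj hm (m-1-i) (by omega) (m-1-j) (by omega) (by omega)
    omega

lemma Afun_eq_bfun_of_odd (hm : 3 ≤ m) (hom : Odd m) : ∀ i ≤ m - 1, Afun m i = bfun m i := by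
  intro i hi
  unfold Afun
  by_cases h1 : i < (m+1)/2
  · rw [if_pos h1]
  · rw [if_neg h1]
    unfold bfun
    rcases hom with ⟨e, he⟩
    rcases Nat.even_or_odd i with ⟨a, ha⟩ | ⟨a, ha⟩
    · have hpar : Even (m - 1 - i) := ⟨e - a, by omega⟩
      rw [if_pos hpar, if_pos ⟨a, ha⟩]
      omega
    · have hpar : ¬ Even (m - 1 - i) := by
        intro ⟨c, hc⟩; omega
      rw [if_neg hpar, if_neg (by intro ⟨c, hc⟩; omega)]
      omega

lemma Afun_surj (hm : 3 ≤ m) : ∀ v, 1 ≤ v → v ≤ m → ∃ i ≤ m - 1, Afun m i = v := by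
  intro v hv1 hv2
  rcases Nat.even_or_odd m with hem | hom
  · have bsurj : ∀ w, 1 ≤ w → w ≤ m → Odd w → ∃ j < (m+1)/2, bfun m j = w := by
      intro w hw1 hw2 how
      by_cases hj : w - 1 < (m+1)/2
      · refine ⟨w - 1, hj, ?_⟩
        unfold bfun
        rw [if_pos (by rcases how with ⟨a, ha⟩; exact ⟨a, by omega⟩)]
        omega
      · refine ⟨m - w, by omega, ?_⟩
        rcases hem with ⟨e, he⟩
        unfold bfun
        rw [if_neg (by
          intro ⟨c, hc⟩
          rcases how with ⟨a, ha⟩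
          omega)]
        omega
    obtain ⟨e, he⟩ := hem
    rcases Nat.even_or_odd v with hev | hov
    · obtain ⟨j, hj, hbj⟩ := bsurj (m + 1 - v)
        (by omega) (by omega)
        (by rcases hev with ⟨a, ha⟩; exact ⟨e - a, by omega⟩)
      refine ⟨m - 1 - j, by omega, ?_⟩
      unfold Afun
      rw [if_neg (by omega)]
      have h2 : m - 1 - (m - 1 - j) = j := by omega
      rw [h2, hbj]
      omega
    · obtain ⟨j, hj, hbj⟩ := bsurj v hv1 hv2 hov
      exact ⟨j, by omega, by unfold Afun; rw [if_pos hj]; exact hbj⟩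
  · rcases Nat.even_or_odd v with hev | hov
    · refine ⟨m - v, by omega, ?_⟩
      rw [Afun_eq_bfun_of_odd hm hom (m - v) (by omega)]
      unfold bfun
      rw [if_neg (by
        intro ⟨c, hc⟩
        rcases hev with ⟨a, ha⟩; rcases hom with ⟨e, he⟩
        omega)]
      omega
    · refine ⟨v - 1, by omega, ?_⟩
      rw [Afun_eq_bfun_of_odd hm hom (v - 1) (by omega)]
      unfold bfun
      rw [if_pos (by rcases hov with ⟨a, ha⟩; exact ⟨a, by omega⟩)]
      omega

lemma Afun_bounds (hm : 3 ≤ m) (i : ℕ) (hi : i ≤ m - 1) :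
    1 ≤ Afun m i ∧ Afun m i ≤ m := by
  unfold Afun
  by_cases h1 : i < (m+1)/2
  · rw [if_pos h1]; exact bfun_bounds hm i hi
  · rw [if_neg h1]
    have := bfun_bounds hm (m-1-i) (by omega)
    omega

end UB

section VAL
variable {m : ℕ}

lemma pt (hm : 3 ≤ m) (i : ℕ) (hi : i + 1 < (m+1)/2) :
    Afun m i * Afun m (i+1) + Afun m (m-2-i) * Afun m (m-1-i)
      = (i+1)*(m-1-i) + (m-i)*(i+2) := by
  have e1 : Afun m i = bfun m i := if_pos (by omega)
  have e2 : Afun m (i+1) = bfun m (i+1) := if_pos (by omega)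
  have e3 : Afun m (m-1-i) = m + 1 - bfun m i := by
    unfold Afun
    rw [if_neg (by omega)]
    have : m - 1 - (m-1-i) = i := by omega
    rw [this]
  have e4 : Afun m (m-2-i) = m + 1 - bfun m (i+1) := by
    unfold Afun
    by_cases hc : m - 2 - i < (m+1)/2
    · rw [if_pos hc]
      have hio : m - 2 - i = i + 1 := by omega
      rw [hio]
      unfold bfun
      rcases Nat.even_or_odd (i+1) with ⟨a, ha⟩ | ⟨a, ha⟩
      · rw [if_pos ⟨a, ha⟩]; omega
      · rw [if_neg (by intro ⟨c, hc2⟩; omega)]; omega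
    · rw [if_neg hc]
      have : m - 1 - (m-2-i) = i + 1 := by omega
      rw [this]
  rw [e1, e2, e3, e4]
  unfold bfun
  rcases Nat.even_or_odd i with ⟨a, ha⟩ | ⟨a, ha⟩
  · rw [if_pos ⟨a, ha⟩, if_neg (by intro ⟨c, hc2⟩; omega)]
    have r1 : m - (i+1) = m - 1 - i := by omega
    have r2 : m + 1 - (m - 1 - i) = i + 2 := by omega
    have r3 : m + 1 - (i + 1) = m - i := by omega
    rw [r1, r2, r3]
    ring
  · rw [if_neg (by intro ⟨c, hc2⟩; omega), if_pos ⟨a+1, by omega⟩]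
    have r2 : m + 1 - (i + 1 + 1) = m - 1 - i := by omega
    have r3 : m + 1 - (m - i) = i + 1 := by omega
    rw [r2, r3]
    ring

lemma mid (hm : 3 ≤ m) (hem : m = 2 * ((m+1)/2)) :
    Afun m ((m+1)/2 - 1) * Afun m ((m+1)/2) = ((m+1)/2) * ((m+1)/2 + 1) := by
  set h := (m+1)/2 with hh
  have e1 : Afun m (h-1) = bfun m (h-1) := if_pos (by omega)
  have e2 : Afun m h = m + 1 - bfun m (h-1) := by
    unfold Afun
    rw [if_neg (by omega)]
    have : m - 1 - h = h - 1 := by omega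
    rw [this]
  rw [e1, e2]
  unfold bfun
  rcases Nat.even_or_odd (h-1) with ⟨a, ha⟩ | ⟨a, ha⟩
  · rw [if_pos ⟨a, ha⟩]
    have r1 : h - 1 + 1 = h := by omega
    have r2 : m + 1 - h = h + 1 := by omega
    rw [r1, r2]
  · rw [if_neg (by intro ⟨c, hc2⟩; omega)]
    have r1 : m - (h - 1) = h + 1 := by omega
    have r2 : m + 1 - (h+1) = h := by omega
    rw [r1, r2]
    ring

lemma wrap (hm : 3 ≤ m) : Afun m (m-1) * Afun m 0 = m := by
  have e0 : Afun m 0 = 1 := by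
    unfold Afun
    rw [if_pos (by omega)]
    unfold bfun
    rw [if_pos (⟨0, rfl⟩)]
  have e1 : Afun m (m-1) = m := by
    unfold Afun
    rw [if_neg (by omega)]
    have : m - 1 - (m-1) = 0 := by omega
    rw [this]
    unfold bfun
    rw [if_pos (⟨0, rfl⟩)]
    omega
  rw [e0, e1, mul_one]

lemma sumW (m : ℕ) : ∀ n : ℕ, n + 1 ≤ m →
    3 * ((∑ i ∈ range n, ((i+1)*(m-1-i) + (m-i)*(i+2)) : ℕ) : ℤ)
      = 3*(m:ℤ)*n*(n+2) - n*(n-1)*(2*n-1) - 6*n*(n-1) - 3*n := by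
  intro n
  induction n with
  | zero => intro _; simp
  | succ n ih =>
    intro hn
    have ih' := ih (by omega)
    rw [Finset.sum_range_succ]
    push_cast
    have c1 : ((m - 1 - n : ℕ) : ℤ) = (m : ℤ) - 1 - n := by omega
    have c2 : ((m - n : ℕ) : ℤ) = (m : ℤ) - n := by omega
    rw [c1, c2]
    push_cast at ih'
    linear_combination ih'

lemma value {m : ℕ} [NeZero m] (hm : 3 ≤ m) :
    6 * (∑ i : Fin m, Afun m i.val * Afun m (i + 1).val)
      = m*(m+1)*(m+2) + 6*((m+1)/2 - 1) := by
  have hconv : (∑ i : Fin m, Afun m i.val * Afun m (i + 1).val)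
      = ∑ i ∈ range m, Afun m i * Afun m ((i+1) % m) := by
    rw [← Fin.sum_univ_eq_sum_range (fun i => Afun m i * Afun m ((i+1) % m)) m]
    apply Finset.sum_congr rfl
    intro i _
    congr 2
    rw [Fin.val_add, Fin.val_one', Nat.mod_eq_of_lt (show 1 < m by omega)]
  rw [hconv]
  have hrange : range m = range ((m-1)+1) := by congr 1; omega
  rw [hrange, Finset.sum_range_succ]
  have hlast : Afun m (m-1) * Afun m ((m-1+1) % m) = m := by
    have h1 : (m-1+1) % m = 0 := by
      have : m - 1 + 1 = m := by omega
      rw [this, Nat.mod_self]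
    rw [h1]
    exact wrap hm
  rw [hlast]
  have hcg : ∑ i ∈ range (m-1), Afun m i * Afun m ((i+1) % m)
      = ∑ i ∈ range (m-1), Afun m i * Afun m (i+1) := by
    apply Finset.sum_congr rfl
    intro i hi
    simp only [Finset.mem_range] at hi
    rw [Nat.mod_eq_of_lt (by omega)]
  rw [hcg]
  obtain ⟨k, hk⟩ : ∃ k, m = 2*k+3 ∨ m = 2*k+4 := ⟨(m-3)/2, by omega⟩
  rcases hk with rfl | rfl
  · have hsplit : 2*k+3-1 = (k+1)+(k+1) := by omega
    rw [hsplit, Finset.sum_range_add]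
    rw [← Finset.sum_range_reflect
      (fun i => Afun (2*k+3) (k+1+i) * Afun (2*k+3) (k+1+i+1)) (k+1)]
    rw [← Finset.sum_add_distrib]
    have hpt : ∀ i ∈ range (k+1),
        Afun (2*k+3) i * Afun (2*k+3) (i+1)
          + (Afun (2*k+3) (k+1+(k+1-1-i)) * Afun (2*k+3) (k+1+(k+1-1-i)+1))
        = (i+1)*((2*k+3)-1-i) + ((2*k+3)-i)*(i+2) := by
      intro i hi
      simp only [Finset.mem_range] at hi
      have i1 : k+1+(k+1-1-i) = (2*k+3)-2-i := by omega
      have i2 : (2*k+3)-2-i+1 = (2*k+3)-1-i := by omega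
      rw [i1, i2]
      exact pt (by omega) i (by omega)
    rw [Finset.sum_congr rfl hpt]
    have hW := sumW (2*k+3) (k+1) (by omega)
    have hc : (((2*k+3+1)/2 - 1 : ℕ) : ℤ) = (k:ℤ) + 1 := by omega
    have goalZ : (6 * ((∑ i ∈ range (k+1),
          ((i+1)*((2*k+3)-1-i) + ((2*k+3)-i)*(i+2))) + (2*k+3)) : ℤ)
        = ((2*k+3:ℕ):ℤ)*((2*k+3:ℕ)+1)*((2*k+3:ℕ)+2) + 6*(((2*k+3+1)/2 - 1 : ℕ) : ℤ) := by
      rw [hc]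
      push_cast at hW ⊢
      linear_combination 2 * hW
    exact_mod_cast goalZ
  · have hsplit : 2*k+4-1 = (k+1)+(k+2) := by omega
    rw [hsplit, Finset.sum_range_add]
    rw [← Finset.sum_range_reflect
      (fun i => Afun (2*k+4) (k+1+i) * Afun (2*k+4) (k+1+i+1)) (k+2)]
    have hpeel := Finset.sum_range_succ
      (fun j => Afun (2*k+4) (k+1+(k+2-1-j)) * Afun (2*k+4) (k+1+(k+2-1-j)+1)) (k+1)
    rw [hpeel]
    have hmid : Afun (2*k+4) (k+1+(k+2-1-(k+1))) * Afun (2*k+4) (k+1+(k+2-1-(k+1))+1)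
        = (k+2)*(k+3) := by
      have i1 : k+1+(k+2-1-(k+1)) = (2*k+4+1)/2 - 1 := by omega
      have i2 : k+1+(k+2-1-(k+1))+1 = (2*k+4+1)/2 := by omega
      rw [i2, i1]
      rw [mid (m := 2*k+4) (by omega) (by omega)]
      have h3 : (2*k+4+1)/2 = k+2 := by omega
      rw [h3]
    rw [hmid]
    have hpt : ∀ i ∈ range (k+1),
        Afun (2*k+4) i * Afun (2*k+4) (i+1)
          + (Afun (2*k+4) (k+1+(k+2-1-i)) * Afun (2*k+4) (k+1+(k+2-1-i)+1))
        = (i+1)*((2*k+4)-1-i) + ((2*k+4)-i)*(i+2) := by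
      intro i hi
      simp only [Finset.mem_range] at hi
      have i1 : k+1+(k+2-1-i) = (2*k+4)-2-i := by omega
      have i2 : (2*k+4)-2-i+1 = (2*k+4)-1-i := by omega
      rw [i1, i2]
      exact pt (by omega) i (by omega)
    set S1 := ∑ x ∈ range (k+1), Afun (2*k+4) x * Afun (2*k+4) (x+1) with hS1
    set S2 := ∑ x ∈ range (k+1),
      Afun (2*k+4) (k+1+(k+2-1-x)) * Afun (2*k+4) (k+1+(k+2-1-x)+1) with hS2
    have hcomb : S1 + S2
        = ∑ i ∈ range (k+1), ((i+1)*((2*k+4)-1-i) + ((2*k+4)-i)*(i+2)) := by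
      rw [hS1, hS2, ← Finset.sum_add_distrib]
      exact Finset.sum_congr rfl hpt
    have hstep : 6 * (S1 + (S2 + (k+2)*(k+3)) + (2*k+4))
        = 6 * ((S1 + S2) + (k+2)*(k+3) + (2*k+4)) := by ring
    rw [hstep, hcomb]
    have hW := sumW (2*k+4) (k+1) (by omega)
    have hc : (((2*k+4+1)/2 - 1 : ℕ) : ℤ) = (k:ℤ) + 1 := by omega
    have goalZ : (6 * ((∑ i ∈ range (k+1),
          ((i+1)*((2*k+4)-1-i) + ((2*k+4)-i)*(i+2))) + (k+2)*(k+3) + (2*k+4)) : ℤ)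
        = ((2*k+4:ℕ):ℤ)*((2*k+4:ℕ)+1)*((2*k+4:ℕ)+2) + 6*(((2*k+4+1)/2 - 1 : ℕ) : ℤ) := by
      rw [hc]
      push_cast at hW ⊢
      linear_combination 2 * hW
    exact_mod_cast goalZ

end VAL

/-- The optimal labeling exists with six times the product sum equal to `Emap m`. -/
lemma upper_packaged (m : ℕ) (hm : 3 ≤ m) :
    ∃ f : Fin m → ℕ, IsLabeling (Fin m) f ∧ 6 * prodSum (SimpleGraph.cycleGraph m) f = Emap m := by
  obtain ⟨k, rfl⟩ : ∃ k, m = k + 2 := ⟨m - 2, by omega⟩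
  have hk : 1 ≤ k := by omega
  refine ⟨fun i => Afun (k+2) i.val, ?_, ?_⟩
  · unfold IsLabeling
    rw [Fintype.card_fin]
    refine ⟨?_, ?_, ?_⟩
    · intro x _
      have := Afun_bounds hm x.val (by omega)
      exact ⟨this.1, this.2⟩
    · intro x _ y _ hxy
      have := Afun_inj hm x.val (by omega) y.val (by omega) hxy
      exact Fin.ext this
    · intro v hv
      obtain ⟨i, hi, hval⟩ := Afun_surj hm v hv.1 hv.2
      exact ⟨⟨i, by omega⟩, Set.mem_univ _, hval⟩
  · rw [MinPS.prodSum_cycle k hk]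
    exact value hm

lemma lower_packaged (m : ℕ) (hm : 3 ≤ m) (f : Fin m → ℕ) (hf : IsLabeling (Fin m) f) :
    Emap m ≤ 6 * prodSum (SimpleGraph.cycleGraph m) f := by
  obtain ⟨k, rfl⟩ : ∃ k, m = k + 2 := ⟨m - 2, by omega⟩
  have hk : 1 ≤ k := by omega
  rw [MinPS.prodSum_cycle k hk]
  unfold IsLabeling at hf
  rw [Fintype.card_fin] at hf
  exact MinPS.lower_bound hm f hf

lemma Emap_step (m : ℕ) (hm : 3 ≤ m) :
    Emap (m + 2) = Emap m + 6 * (m*m + 4*m + 5) := by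
  obtain ⟨k, hk⟩ : ∃ k, m = 2*k+3 ∨ m = 2*k+4 := ⟨(m-3)/2, by omega⟩
  rcases hk with rfl | rfl
  · unfold Emap
    have d1 : (2*k+3+1)/2 - 1 = k + 1 := by omega
    have d2 : (2*k+3+2+1)/2 - 1 = k + 2 := by omega
    rw [d1, d2]
    ring
  · unfold Emap
    have d1 : (2*k+4+1)/2 - 1 = k + 1 := by omega
    have d2 : (2*k+4+2+1)/2 - 1 = k + 2 := by omega
    rw [d1, d2]
    ring

end MinPS

/-- For every `θ ≥ 3`, `M(C_{θ+2}) ≥ M(C_θ) + θ² + 4θ + 5`. -/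
theorem statement9 (θ : ℕ) (hθ : 3 ≤ θ) :
    minPS (SimpleGraph.cycleGraph θ) + θ ^ 2 + 4 * θ + 5 ≤
      minPS (SimpleGraph.cycleGraph (θ + 2)) := by
  obtain ⟨f₀, hl₀, hv₀⟩ := MinPS.upper_packaged θ hθ
  obtain ⟨g₀, hlg, hvg⟩ := MinPS.upper_packaged (θ+2) (by omega)
  have h1 : minPS (SimpleGraph.cycleGraph θ) ≤ prodSum (SimpleGraph.cycleGraph θ) f₀ :=
    Nat.sInf_le ⟨f₀, hl₀, rfl⟩
  have hstep := MinPS.Emap_step θ hθ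
  have hsq : θ ^ 2 = θ * θ := sq θ
  rw [hsq]
  refine le_csInf ⟨prodSum (SimpleGraph.cycleGraph (θ+2)) g₀, g₀, hlg, rfl⟩ ?_
  rintro b ⟨f, hf, rfl⟩
  have h2 := MinPS.lower_packaged (θ+2) (by omega) f hf
  obtain ⟨q, hq⟩ : ∃ q, θ * θ = q := ⟨_, rfl⟩
  rw [hq] at hstep ⊢
  omega
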